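/- Let k ≥ 1 and j ≥ 1 be integers. (i) Set p = F_{k+1} + j F_{k+2} and q = F_k + j F_{k+1}, and u = p/q. Then q²·(u² − 7u + 1) = j² + 7j + 1; equivalently, p² − 7pq + q² = j² + 7j + 1. (ii) Set p = L_k + j F_{k+1} and q = L_{k−1} + j F_k, and v = p/q. Then q²·(v² − 7v + 1) = j² − 5j − 5; equivalently, p² − 7pq + q² = j² − 5j − 5 (an identity of integers, whose right-hand side may be negative). -/

import Mathlib

/-- The Lucas numbers `ℓ_k = f_{k-1} + f_{k+1}` (for `k ≥ 1`). -/
def luc (k : ℕ) : ℕ := Nat.fib (k - 1) + Nat.fib (k + 1)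

/-- `F_k = f_{4k}/3`. -/
def Fq (k : ℕ) : ℚ := (Nat.fib (4 * k) : ℚ) / 3

/-- `L_k = ℓ_{4k+2}/3`. -/
def Lq (k : ℕ) : ℚ := (luc (4 * k + 2) : ℚ) / 3

lemma fib78 (n : ℕ) : Nat.fib (n + 8) + Nat.fib n = 7 * Nat.fib (n + 4) := by
  have h2 : Nat.fib (n + 2) = Nat.fib n + Nat.fib (n + 1) := Nat.fib_add_two
  have h3 : Nat.fib (n + 3) = Nat.fib (n + 1) + Nat.fib (n + 2) := Nat.fib_add_two
  have h4 : Nat.fib (n + 4) = Nat.fib (n + 2) + Nat.fib (n + 3) := Nat.fib_add_two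
  have h5 : Nat.fib (n + 5) = Nat.fib (n + 3) + Nat.fib (n + 4) := Nat.fib_add_two
  have h6 : Nat.fib (n + 6) = Nat.fib (n + 4) + Nat.fib (n + 5) := Nat.fib_add_two
  have h7 : Nat.fib (n + 7) = Nat.fib (n + 5) + Nat.fib (n + 6) := Nat.fib_add_two
  have h8 : Nat.fib (n + 8) = Nat.fib (n + 6) + Nat.fib (n + 7) := Nat.fib_add_two
  omega

lemma Fq_rec (k : ℕ) : Fq (k + 2) = 7 * Fq (k + 1) - Fq k := by
  have h := fib78 (4 * k)
  have h' : (Nat.fib (4 * k + 8) : ℚ) + Nat.fib (4 * k) = 7 * Nat.fib (4 * k + 4) := by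
    exact_mod_cast congrArg (Nat.cast : ℕ → ℚ) h
  unfold Fq
  have e1 : 4 * (k + 2) = 4 * k + 8 := by ring
  have e2 : 4 * (k + 1) = 4 * k + 4 := by ring
  rw [e1, e2]
  linarith

lemma Lq_rec (k : ℕ) : Lq (k + 2) = 7 * Lq (k + 1) - Lq k := by
  have h1 := fib78 (4 * k + 1)
  have h2 := fib78 (4 * k + 3)
  have h1' : (Nat.fib (4 * k + 1 + 8) : ℚ) + Nat.fib (4 * k + 1) = 7 * Nat.fib (4 * k + 1 + 4) := by
    exact_mod_cast congrArg (Nat.cast : ℕ → ℚ) h1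
  have h2' : (Nat.fib (4 * k + 3 + 8) : ℚ) + Nat.fib (4 * k + 3) = 7 * Nat.fib (4 * k + 3 + 4) := by
    exact_mod_cast congrArg (Nat.cast : ℕ → ℚ) h2
  unfold Lq luc
  have e1 : 4 * (k + 2) + 2 - 1 = 4 * k + 1 + 8 := by omega
  have e2 : 4 * (k + 2) + 2 + 1 = 4 * k + 3 + 8 := by omega
  have e3 : 4 * (k + 1) + 2 - 1 = 4 * k + 1 + 4 := by omega
  have e4 : 4 * (k + 1) + 2 + 1 = 4 * k + 3 + 4 := by omega
  have e5 : 4 * k + 2 - 1 = 4 * k + 1 := by omega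
  have e6 : 4 * k + 2 + 1 = 4 * k + 3 := by omega
  rw [e1, e2, e3, e4, e5, e6]
  push_cast
  linarith

lemma Fq_pos (k : ℕ) (hk : 1 ≤ k) : 0 < Fq k := by
  unfold Fq
  have : 0 < Nat.fib (4 * k) := Nat.fib_pos.mpr (by omega)
  have : (0 : ℚ) < Nat.fib (4 * k) := by exact_mod_cast this
  linarith

lemma Fq_nonneg (k : ℕ) : 0 ≤ Fq k := by
  unfold Fq; positivity

lemma Lq_pos (k : ℕ) : 0 < Lq k := by
  unfold Lq luc
  apply div_pos _ (by norm_num)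
  have h : 0 < Nat.fib (4 * k + 2 + 1) := Nat.fib_pos.mpr (by omega)
  exact_mod_cast show 0 < Nat.fib (4 * k + 2 - 1) + Nat.fib (4 * k + 2 + 1) by omega

lemma part_i (k : ℕ) (hk : 1 ≤ k) (j : ℚ) :
    (Fq (k + 1) + j * Fq (k + 2)) ^ 2
        - 7 * (Fq (k + 1) + j * Fq (k + 2)) * (Fq k + j * Fq (k + 1))
        + (Fq k + j * Fq (k + 1)) ^ 2 = j ^ 2 + 7 * j + 1 := by
  induction k, hk using Nat.le_induction with
  | base =>
    have h1 : Fq 1 = 1 := by norm_num [Fq, Nat.fib]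
    have h2 : Fq 2 = 7 := by norm_num [Fq]
    have h3 : Fq 3 = 48 := by norm_num [Fq]
    rw [h1, h2, h3]; ring
  | succ k hk ih =>
    rw [Fq_rec (k + 1), Fq_rec k]
    rw [Fq_rec k] at ih
    linear_combination ih

lemma part_ii (k : ℕ) (hk : 1 ≤ k) (j : ℚ) :
    (Lq k + j * Fq (k + 1)) ^ 2
        - 7 * (Lq k + j * Fq (k + 1)) * (Lq (k - 1) + j * Fq k)
        + (Lq (k - 1) + j * Fq k) ^ 2 = j ^ 2 - 5 * j - 5 := by
  induction k, hk using Nat.le_induction with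
  | base =>
    have h1 : Fq 1 = 1 := by norm_num [Fq, Nat.fib]
    have h2 : Fq 2 = 7 := by norm_num [Fq]
    have l0 : Lq 0 = 1 := by norm_num [Lq, luc, Nat.fib]
    have l1 : Lq 1 = 6 := by norm_num [Lq, luc]
    norm_num
    rw [h1, h2, l0, l1]; ring
  | succ k hk ih =>
    obtain ⟨m, rfl⟩ := Nat.exists_eq_add_of_le hk
    have e : 1 + m = m + 1 := by omega
    rw [e] at ih ⊢
    simp only [show m + 1 + 1 - 1 = m + 1 from by omega,
      show m + 1 - 1 = m from by omega] at ih ⊢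
    rw [show m + 1 + 1 = m + 2 from rfl, Lq_rec m, Fq_rec (m + 1)]
    linear_combination ih

/-- **Corollary 4.6 (co:hh).** For `k ≥ 1` and `j ≥ 1`:
(i) with `p = F_{k+1} + jF_{k+2}`, `q = F_k + jF_{k+1}`, `u = p/q`, one has
`q²(u² − 7u + 1) = j² + 7j + 1`, equivalently `p² − 7pq + q² = j² + 7j + 1`;
(ii) with `p = L_k + jF_{k+1}`, `q = L_{k−1} + jF_k`, `v = p/q`, one has
`q²(v² − 7v + 1) = j² − 5j − 5`, equivalently `p² − 7pq + q² = j² − 5j − 5`. -/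
theorem stmt_16 (k j : ℕ) (hk : 1 ≤ k) (hj : 1 ≤ j) :
    ((Fq k + j * Fq (k + 1)) ^ 2 *
        (((Fq (k + 1) + j * Fq (k + 2)) / (Fq k + j * Fq (k + 1))) ^ 2
          - 7 * ((Fq (k + 1) + j * Fq (k + 2)) / (Fq k + j * Fq (k + 1))) + 1)
      = (j : ℚ) ^ 2 + 7 * j + 1 ∧
     (Fq (k + 1) + j * Fq (k + 2)) ^ 2
        - 7 * (Fq (k + 1) + j * Fq (k + 2)) * (Fq k + j * Fq (k + 1))
        + (Fq k + j * Fq (k + 1)) ^ 2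
      = (j : ℚ) ^ 2 + 7 * j + 1) ∧
    ((Lq (k - 1) + j * Fq k) ^ 2 *
        (((Lq k + j * Fq (k + 1)) / (Lq (k - 1) + j * Fq k)) ^ 2
          - 7 * ((Lq k + j * Fq (k + 1)) / (Lq (k - 1) + j * Fq k)) + 1)
      = (j : ℚ) ^ 2 - 5 * j - 5 ∧
     (Lq k + j * Fq (k + 1)) ^ 2
        - 7 * (Lq k + j * Fq (k + 1)) * (Lq (k - 1) + j * Fq k)
        + (Lq (k - 1) + j * Fq k) ^ 2
      = (j : ℚ) ^ 2 - 5 * j - 5) := by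
  have hj0 : (0 : ℚ) ≤ (j : ℚ) := by positivity
  have hq1 : (0 : ℚ) < Fq k + j * Fq (k + 1) := by
    have := Fq_pos k hk
    have := mul_nonneg hj0 (Fq_nonneg (k + 1))
    linarith
  have hq2 : (0 : ℚ) < Lq (k - 1) + j * Fq k := by
    have := Lq_pos (k - 1)
    have := mul_nonneg hj0 (Fq_nonneg k)
    linarith
  have hi := part_i k hk (j : ℚ)
  have hii := part_ii k hk (j : ℚ)
  refine ⟨⟨?_, hi⟩, ⟨?_, hii⟩⟩
  · rw [← hi]; field_simp
  · rw [← hii]; field_simp
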